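/- (Blindness of score matching to mixing proportions.) Fix μ₁ ∈ ℝ, σ > 0 and two mixing proportions π, π' ∈ (0,1) with π ≠ π'. Writing p_{μ₂,π}(x) = π φ_{μ₁,σ}(x) + (1−π) φ_{μ₂,σ}(x), the Fisher divergence between the two mixtures that differ only in their mixing proportion vanishes in the limit of separated components: J(p_{μ₂,π} ‖ p_{μ₂,π'}) → 0 as μ₂ → +∞. -/

import Mathlib

open MeasureTheory Filter

/-- Gaussian density with mean `μ` and standard deviation `σ`. -/
noncomputable def gaussian (μ σ : ℝ) (x : ℝ) : ℝ :=
  (σ * Real.sqrt (2 * Real.pi))⁻¹ * Real.exp (-(x - μ) ^ 2 / (2 * σ ^ 2))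

/-- The score of a density `ρ`: the derivative of its log. -/
noncomputable def score (ρ : ℝ → ℝ) (x : ℝ) : ℝ :=
  deriv (fun y => Real.log (ρ y)) x

/-- Fisher divergence between densities `q` and `p`. -/
noncomputable def fisherDiv (q p : ℝ → ℝ) : ℝ :=
  ∫ x : ℝ, q x * (score q x - score p x) ^ 2

lemma gaussian_pos {μ σ : ℝ} (hσ : 0 < σ) (x : ℝ) : 0 < gaussian μ σ x := by
  have h2π : 0 < Real.sqrt (2 * Real.pi) := Real.sqrt_pos.mpr (by positivity)
  exact mul_pos (inv_pos.mpr (by positivity)) (Real.exp_pos _)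

lemma hasDerivAt_gaussian {μ σ : ℝ} (hσ : 0 < σ) (x : ℝ) :
    HasDerivAt (gaussian μ σ) (-(x - μ) / σ ^ 2 * gaussian μ σ x) x := by
  have hf : HasDerivAt (fun y : ℝ => -(y - μ) ^ 2 / (2 * σ ^ 2)) (-(x - μ) / σ ^ 2) x := by
    have h1 : HasDerivAt (fun y : ℝ => y - μ) 1 x := (hasDerivAt_id x).sub_const μ
    have h2 : HasDerivAt (fun y : ℝ => (y - μ) ^ 2) (2 * (x - μ)) x := by
      simpa using h1.fun_pow 2
    have h3 := (h2.fun_neg).div_const (2 * σ ^ 2)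
    refine h3.congr_deriv ?_
    ring
  have h := (hf.exp).const_mul ((σ * Real.sqrt (2 * Real.pi))⁻¹)
  have heq : (σ * Real.sqrt (2 * Real.pi))⁻¹ * (Real.exp (-(x - μ) ^ 2 / (2 * σ ^ 2)) * (-(x - μ) / σ ^ 2))
      = -(x - μ) / σ ^ 2 * gaussian μ σ x := by
    unfold gaussian; ring
  rw [heq] at h
  exact h

lemma score_mix {μ₁ μ₂ σ a b : ℝ} (hσ : 0 < σ) (ha : 0 < a) (hb : 0 < b) (x : ℝ) :
    score (fun y => a * gaussian μ₁ σ y + b * gaussian μ₂ σ y) x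
      = (a * (-(x - μ₁) / σ ^ 2 * gaussian μ₁ σ x)
          + b * (-(x - μ₂) / σ ^ 2 * gaussian μ₂ σ x))
        / (a * gaussian μ₁ σ x + b * gaussian μ₂ σ x) := by
  have hq : HasDerivAt (fun y => a * gaussian μ₁ σ y + b * gaussian μ₂ σ y)
      (a * (-(x - μ₁) / σ ^ 2 * gaussian μ₁ σ x)
        + b * (-(x - μ₂) / σ ^ 2 * gaussian μ₂ σ x)) x :=
    ((hasDerivAt_gaussian hσ x).const_mul a).add ((hasDerivAt_gaussian hσ x).const_mul b)
  have hpos : a * gaussian μ₁ σ x + b * gaussian μ₂ σ x ≠ 0 := by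
    have := gaussian_pos (μ := μ₁) hσ x
    have := gaussian_pos (μ := μ₂) hσ x
    positivity
  exact (hq.log hpos).deriv

lemma score_diff_eq {σ x μ₁ μ₂ w w' g1 g2 : ℝ} (hσ : σ ≠ 0) (hg1 : 0 < g1) (hg2 : 0 < g2)
    (hq : w * g1 + (1 - w) * g2 ≠ 0) (hp : w' * g1 + (1 - w') * g2 ≠ 0) :
    (w * (-(x - μ₁) / σ ^ 2 * g1) + (1 - w) * (-(x - μ₂) / σ ^ 2 * g2))
        / (w * g1 + (1 - w) * g2)
      - (w' * (-(x - μ₁) / σ ^ 2 * g1) + (1 - w') * (-(x - μ₂) / σ ^ 2 * g2))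
        / (w' * g1 + (1 - w') * g2)
      = (μ₂ - μ₁) * (w' - w) * g1 * g2
        / (σ ^ 2 * ((w * g1 + (1 - w) * g2) * (w' * g1 + (1 - w') * g2))) := by
  rw [div_sub_div _ _ hq hp, div_eq_div_iff (mul_ne_zero hq hp)
    (mul_ne_zero (pow_ne_zero 2 hσ) (mul_ne_zero hq hp))]
  field_simp
  ring

lemma sqrt_gaussian_mul {μ₁ μ₂ σ : ℝ} (hσ : 0 < σ) (x : ℝ) :
    Real.sqrt (gaussian μ₁ σ x * gaussian μ₂ σ x)
      = Real.exp (-(μ₂ - μ₁) ^ 2 / (8 * σ ^ 2)) * gaussian ((μ₁ + μ₂) / 2) σ x := by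
  have hc : (0:ℝ) ≤ (σ * Real.sqrt (2 * Real.pi))⁻¹ := by positivity
  have key : gaussian μ₁ σ x * gaussian μ₂ σ x
      = (Real.exp (-(μ₂ - μ₁) ^ 2 / (8 * σ ^ 2)) * gaussian ((μ₁ + μ₂) / 2) σ x) ^ 2 := by
    unfold gaussian
    rw [show ∀ a b c : ℝ, (c * Real.exp a) * (c * Real.exp b) = c ^ 2 * Real.exp (a + b) from
      fun a b c => by rw [Real.exp_add]; ring]
    rw [show ∀ e f c : ℝ, (Real.exp e * (c * Real.exp f)) ^ 2
        = c ^ 2 * Real.exp (2 * (e + f)) from fun e f c => by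
      have h1 : Real.exp e * (c * Real.exp f) = c * Real.exp (e + f) := by
        rw [Real.exp_add]; ring
      rw [h1, mul_pow, pow_two (Real.exp (e + f)), ← Real.exp_add,
        show e + f + (e + f) = 2 * (e + f) from by ring]]
    congr 1
    field_simp
    ring
  have hnn : (0:ℝ) ≤ Real.exp (-(μ₂ - μ₁) ^ 2 / (8 * σ ^ 2)) * gaussian ((μ₁ + μ₂) / 2) σ x :=
    mul_nonneg (Real.exp_pos _).le (gaussian_pos hσ x).le
  rw [key, Real.sqrt_sq hnn]

set_option maxHeartbeats 1000000 in
lemma integrable_gaussian {μ σ : ℝ} (hσ : 0 < σ) : Integrable (gaussian μ σ) := by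
  have hb : (0:ℝ) < (2 * σ ^ 2)⁻¹ := by positivity
  have heq : gaussian μ σ
      = fun x => (σ * Real.sqrt (2 * Real.pi))⁻¹ * Real.exp (-(2 * σ ^ 2)⁻¹ * (x - μ) ^ 2) := by
    funext x
    unfold gaussian
    rw [show -(x - μ) ^ 2 / (2 * σ ^ 2) = -(2 * σ ^ 2)⁻¹ * (x - μ) ^ 2 by ring]
  rw [heq]
  exact ((integrable_exp_neg_mul_sq hb).comp_sub_right μ).const_mul _

lemma integral_gaussian_shift {μ σ : ℝ} :
    (∫ x : ℝ, gaussian μ σ x) = ∫ x : ℝ, gaussian 0 σ x := by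
  have : ∀ x : ℝ, gaussian μ σ x = gaussian 0 σ (x - μ) := by
    intro x; unfold gaussian; rw [sub_zero]
  simp_rw [this]
  exact integral_sub_right_eq_self (gaussian 0 σ) μ

set_option maxHeartbeats 1000000 in
lemma pointwise_bound (μ₁ σ w w' : ℝ) (hσ : 0 < σ)
    (hw : w ∈ Set.Ioo (0 : ℝ) 1) (hw' : w' ∈ Set.Ioo (0 : ℝ) 1) (μ₂ x : ℝ) :
    (w * gaussian μ₁ σ x + (1 - w) * gaussian μ₂ σ x) *
        (score (fun y => w * gaussian μ₁ σ y + (1 - w) * gaussian μ₂ σ y) x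
          - score (fun y => w' * gaussian μ₁ σ y + (1 - w') * gaussian μ₂ σ y) x) ^ 2
      ≤ ((μ₂ - μ₁) ^ 2 * (w' - w) ^ 2 /
          (σ ^ 4 * (Real.sqrt (w * (1 - w)) * Real.sqrt (w' * (1 - w')) ^ 2))) *
        (Real.exp (-(μ₂ - μ₁) ^ 2 / (8 * σ ^ 2)) * gaussian ((μ₁ + μ₂) / 2) σ x) := by
  obtain ⟨hw0, hw1⟩ := hw
  obtain ⟨hw'0, hw'1⟩ := hw'
  have hg1 : 0 < gaussian μ₁ σ x := gaussian_pos hσ x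
  have hg2 : 0 < gaussian μ₂ σ x := gaussian_pos hσ x
  set g1 := gaussian μ₁ σ x with hg1def
  set g2 := gaussian μ₂ σ x with hg2def
  have hQ : 0 < w * g1 + (1 - w) * g2 := by nlinarith
  have hP : 0 < w' * g1 + (1 - w') * g2 := by nlinarith
  rw [score_mix hσ hw0 (by linarith) x, score_mix hσ hw'0 (by linarith) x,
    score_diff_eq (ne_of_gt hσ) hg1 hg2 hQ.ne' hP.ne']
  set Q := w * g1 + (1 - w) * g2
  set P := w' * g1 + (1 - w') * g2
  set s := Real.sqrt (g1 * g2) with hsdef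
  have hspos : 0 < s := Real.sqrt_pos.mpr (by positivity)
  have hs2 : s ^ 2 = g1 * g2 := Real.sq_sqrt (by positivity)
  set cq := Real.sqrt (w * (1 - w)) with hcqdef
  set cp := Real.sqrt (w' * (1 - w')) with hcpdef
  have hcq : 0 < cq := Real.sqrt_pos.mpr (by nlinarith)
  have hcp : 0 < cp := Real.sqrt_pos.mpr (by nlinarith)
  have hcq2 : cq ^ 2 = w * (1 - w) := Real.sq_sqrt (by nlinarith)
  have hcp2 : cp ^ 2 = w' * (1 - w') := Real.sq_sqrt (by nlinarith)
  have hql : cq * s ≤ Q := by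
    have h2 : (cq * s) ^ 2 ≤ (w * g1 + (1 - w) * g2) ^ 2 := by
      rw [mul_pow, hcq2, hs2]
      nlinarith [sq_nonneg (w * g1 - (1 - w) * g2)]
    have h3 := Real.sqrt_le_sqrt h2
    rwa [Real.sqrt_sq (by positivity), Real.sqrt_sq hQ.le] at h3
  have hpl : cp * s ≤ P := by
    have h2 : (cp * s) ^ 2 ≤ (w' * g1 + (1 - w') * g2) ^ 2 := by
      rw [mul_pow, hcp2, hs2]
      nlinarith [sq_nonneg (w' * g1 - (1 - w') * g2)]
    have h3 := Real.sqrt_le_sqrt h2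
    rwa [Real.sqrt_sq (by positivity), Real.sqrt_sq hP.le] at h3
  have hLHS : Q * ((μ₂ - μ₁) * (w' - w) * g1 * g2 / (σ ^ 2 * (Q * P))) ^ 2
      = ((μ₂ - μ₁) ^ 2 * (w' - w) ^ 2 / σ ^ 4) * ((s ^ 2) ^ 2 / (Q * P ^ 2)) := by
    rw [hs2]
    field_simp
  rw [hLHS]
  have hbound : (s ^ 2) ^ 2 / (Q * P ^ 2) ≤ (s ^ 2) ^ 2 / ((cq * s) * (cp * s) ^ 2) := by
    apply div_le_div_of_nonneg_left (by positivity) (by positivity)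
    exact mul_le_mul hql (pow_le_pow_left₀ (by positivity) hpl 2) (by positivity) hQ.le
  have hstep := mul_le_mul_of_nonneg_left hbound
    (show (0:ℝ) ≤ (μ₂ - μ₁) ^ 2 * (w' - w) ^ 2 / σ ^ 4 by positivity)
  refine hstep.trans (le_of_eq ?_)
  have hfin : ((μ₂ - μ₁) ^ 2 * (w' - w) ^ 2 / σ ^ 4) * ((s ^ 2) ^ 2 / ((cq * s) * (cp * s) ^ 2))
      = ((μ₂ - μ₁) ^ 2 * (w' - w) ^ 2 / (σ ^ 4 * (cq * cp ^ 2))) * s := by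
    field_simp
  rw [hfin, hsdef, hg1def, hg2def, sqrt_gaussian_mul hσ x]

/-- blindness of score matching to mixing proportions, separated
components limit: the Fisher divergence between two mixtures that differ only in
their mixing proportion vanishes as `μ₂ → +∞`. -/
theorem fisher_blind_to_proportions_separation (μ₁ σ w w' : ℝ) (hσ : 0 < σ)
    (hw : w ∈ Set.Ioo (0 : ℝ) 1) (hw' : w' ∈ Set.Ioo (0 : ℝ) 1) (hne : w ≠ w') :
    Tendsto
      (fun μ₂ => fisherDiv
        (fun y => w * gaussian μ₁ σ y + (1 - w) * gaussian μ₂ σ y)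
        (fun y => w' * gaussian μ₁ σ y + (1 - w') * gaussian μ₂ σ y))
      atTop (nhds 0) := by
  obtain ⟨hw0, hw1⟩ := hw
  obtain ⟨hw'0, hw'1⟩ := hw'
  set cq := Real.sqrt (w * (1 - w)) with hcqdef
  set cp := Real.sqrt (w' * (1 - w')) with hcpdef
  have hcq : 0 < cq := Real.sqrt_pos.mpr (by nlinarith)
  have hcp : 0 < cp := Real.sqrt_pos.mpr (by nlinarith)
  set Iσ := ∫ x : ℝ, gaussian 0 σ x with hIσdef
  set F : ℝ → ℝ := fun μ₂ =>
    ((μ₂ - μ₁) ^ 2 * (w' - w) ^ 2 / (σ ^ 4 * (cq * cp ^ 2))) *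
      (Real.exp (-(μ₂ - μ₁) ^ 2 / (8 * σ ^ 2)) * Iσ) with hFdef
  have hlb : ∀ μ₂ : ℝ, 0 ≤ fisherDiv
      (fun y => w * gaussian μ₁ σ y + (1 - w) * gaussian μ₂ σ y)
      (fun y => w' * gaussian μ₁ σ y + (1 - w') * gaussian μ₂ σ y) := by
    intro μ₂
    apply integral_nonneg
    intro x
    have h1 := gaussian_pos (μ := μ₁) hσ x
    have h2 := gaussian_pos (μ := μ₂) hσ x
    have : (0:ℝ) ≤ w * gaussian μ₁ σ x + (1 - w) * gaussian μ₂ σ x := by nlinarith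
    exact mul_nonneg this (sq_nonneg _)
  have hub : ∀ μ₂ : ℝ, fisherDiv
      (fun y => w * gaussian μ₁ σ y + (1 - w) * gaussian μ₂ σ y)
      (fun y => w' * gaussian μ₁ σ y + (1 - w') * gaussian μ₂ σ y) ≤ F μ₂ := by
    intro μ₂
    have hint : Integrable (fun x : ℝ =>
        ((μ₂ - μ₁) ^ 2 * (w' - w) ^ 2 / (σ ^ 4 * (cq * cp ^ 2))) *
          (Real.exp (-(μ₂ - μ₁) ^ 2 / (8 * σ ^ 2)) * gaussian ((μ₁ + μ₂) / 2) σ x)) :=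
      ((integrable_gaussian hσ).const_mul _).const_mul _
    have hmono := integral_mono_of_nonneg
      (f := fun x => (w * gaussian μ₁ σ x + (1 - w) * gaussian μ₂ σ x) *
        (score (fun y => w * gaussian μ₁ σ y + (1 - w) * gaussian μ₂ σ y) x
          - score (fun y => w' * gaussian μ₁ σ y + (1 - w') * gaussian μ₂ σ y) x) ^ 2)
      (μ := volume)
      (ae_of_all _ fun x => by
        have h1 := gaussian_pos (μ := μ₁) hσ x
        have h2 := gaussian_pos (μ := μ₂) hσ x
        have : (0:ℝ) ≤ w * gaussian μ₁ σ x + (1 - w) * gaussian μ₂ σ x := by nlinarith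
        exact mul_nonneg this (sq_nonneg _))
      hint
      (ae_of_all _ fun x => pointwise_bound μ₁ σ w w' hσ ⟨hw0, hw1⟩ ⟨hw'0, hw'1⟩ μ₂ x)
    refine hmono.trans (le_of_eq ?_)
    rw [integral_const_mul, integral_const_mul, integral_gaussian_shift]
  have hF : Tendsto F atTop (nhds 0) := by
    have h1 : Tendsto (fun μ₂ : ℝ => μ₂ - μ₁) atTop atTop := by
      simpa [sub_eq_add_neg] using tendsto_atTop_add_const_right atTop (-μ₁) tendsto_id
    have h2 : Tendsto (fun μ₂ : ℝ => (μ₂ - μ₁) ^ 2) atTop atTop := by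
      simpa [pow_two] using h1.atTop_mul_atTop₀ h1
    have h3 : Tendsto (fun μ₂ : ℝ => (μ₂ - μ₁) ^ 2 / (8 * σ ^ 2)) atTop atTop :=
      h2.atTop_div_const (by positivity)
    set c : ℝ := 8 * σ ^ 2 * ((w' - w) ^ 2 / (σ ^ 4 * (cq * cp ^ 2))) * Iσ with hcdef
    have houter : Tendsto (fun t : ℝ => c * (t ^ 1 * Real.exp (-t))) atTop (nhds 0) := by
      have := (Real.tendsto_pow_mul_exp_neg_atTop_nhds_zero 1).const_mul c
      simpa using this
    have hcomp := houter.comp h3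
    have heq : F = (fun t : ℝ => c * (t ^ 1 * Real.exp (-t))) ∘
        (fun μ₂ : ℝ => (μ₂ - μ₁) ^ 2 / (8 * σ ^ 2)) := by
      funext μ₂
      simp only [Function.comp_apply, hFdef, hcdef, pow_one]
      rw [show -((μ₂ - μ₁) ^ 2 / (8 * σ ^ 2)) = -(μ₂ - μ₁) ^ 2 / (8 * σ ^ 2) by ring]
      field_simp
    rw [heq]
    exact hcomp
  exact tendsto_of_tendsto_of_tendsto_of_le_of_le tendsto_const_nhds hF hlb hub
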